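/- Let P^π be the 3×3 cyclic permutation matrix sending state 1→2→3→1, with L = I − γP^π, γ ∈ (0,1). Let e₁ = (1,1,1)ᵀ/√3 and let (e₂, e₃) be an orthonormal basis of e₁^⊥. For ω ∈ [0,1], let Φ_ω = [e₁, ω e₂ + (1−ω) e₃] ∈ ℝ^{3×2}, and define the TD value operator V_ω = Φ_ω (Φ_ωᵀ L Φ_ω)^{-1} Φ_ωᵀ. Then ‖V_ω − L^{-1}‖²_F is constant in ω. -/

import Mathlib

open Matrix

/-- Squared Frobenius norm. -/
def frobSq {m n : ℕ} (M : Matrix (Fin m) (Fin n) ℝ) : ℝ :=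
  ∑ i, ∑ j, (M i j) ^ 2

set_option maxHeartbeats 1000000 in
lemma main_aux (γ s u₀ u₁ u₂ Q : ℝ) (hγ0 : 0 < γ) (hγ1 : γ < 1)
    (hs : s ^ 2 = 3) (hs0 : s ≠ 0)
    (h1 : u₀ + u₁ + u₂ = 0) (hQ : u₀ ^ 2 + u₁ ^ 2 + u₂ ^ 2 = Q) (hQ0 : Q ≠ 0) :
    frobSq (!![s⁻¹, u₀; s⁻¹, u₁; s⁻¹, u₂] *
      ((!![s⁻¹, u₀; s⁻¹, u₁; s⁻¹, u₂])ᵀ * !![1, -γ, 0; 0, 1, -γ; -γ, 0, 1] *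
        !![s⁻¹, u₀; s⁻¹, u₁; s⁻¹, u₂])⁻¹ * (!![s⁻¹, u₀; s⁻¹, u₁; s⁻¹, u₂])ᵀ -
      (!![1, -γ, 0; 0, 1, -γ; -γ, 0, 1])⁻¹) = 4 / (2 + γ) ^ 2 := by
  have hγne : (1:ℝ) - γ ≠ 0 := by nlinarith
  have hγ3 : (1:ℝ) - γ ^ 3 ≠ 0 := by
    have : γ ^ 3 < 1 := pow_lt_one₀ hγ0.le hγ1 (by norm_num)
    linarith
  have ha : (1 + γ/2) * Q ≠ 0 := by
    apply mul_ne_zero _ hQ0; nlinarith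
  have hss : s * s = 3 := by nlinarith [hs]
  have h13 : s⁻¹ * s⁻¹ = (3:ℝ)⁻¹ := by rw [← mul_inv, hss]
  have hT : (!![s⁻¹, u₀; s⁻¹, u₁; s⁻¹, u₂])ᵀ = !![s⁻¹, s⁻¹, s⁻¹; u₀, u₁, u₂] := by
    ext i j; fin_cases i <;> fin_cases j <;> rfl
  have hM : (!![s⁻¹, u₀; s⁻¹, u₁; s⁻¹, u₂])ᵀ * !![1, -γ, 0; 0, 1, -γ; -γ, 0, 1] *
      !![s⁻¹, u₀; s⁻¹, u₁; s⁻¹, u₂] = !![1 - γ, 0; 0, (1 + γ/2) * Q] := by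
    rw [hT]
    ext i j
    fin_cases i <;> fin_cases j <;>
      simp [Matrix.mul_apply, Fin.sum_univ_succ, Matrix.transpose_apply]
    · linear_combination 3 * (1 - γ) * h13
    · linear_combination (1 - γ) * s⁻¹ * h1
    · linear_combination (1 - γ) * s⁻¹ * h1
    · linear_combination (1 + γ/2) * hQ - (γ/2) * (u₀ + u₁ + u₂) * h1
  have hMinv : (!![1 - γ, 0; 0, (1 + γ/2) * Q])⁻¹ =
      !![(1 - γ)⁻¹, 0; 0, ((1 + γ/2) * Q)⁻¹] := by
    apply Matrix.inv_eq_right_inv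
    ext i j
    fin_cases i <;> fin_cases j <;>
      simp [Matrix.mul_apply, Fin.sum_univ_succ] <;> field_simp <;> ring
  have hLinv : (!![1, -γ, 0; 0, 1, -γ; -γ, 0, 1])⁻¹ =
      (1 - γ ^ 3)⁻¹ • !![1, γ, γ^2; γ^2, 1, γ; γ, γ^2, 1] := by
    apply Matrix.inv_eq_right_inv
    ext i j
    fin_cases i <;> fin_cases j <;>
      simp [Matrix.mul_apply, Fin.sum_univ_succ, smul_eq_mul] <;>
      field_simp <;> ring
  rw [hM, hMinv, hLinv]
  have hV : !![s⁻¹, u₀; s⁻¹, u₁; s⁻¹, u₂] * !![(1 - γ)⁻¹, 0; 0, ((1 + γ/2) * Q)⁻¹] *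
      (!![s⁻¹, u₀; s⁻¹, u₁; s⁻¹, u₂])ᵀ =
      !![(3:ℝ)⁻¹*(1-γ)⁻¹ + u₀*u₀*((1+γ/2)*Q)⁻¹, (3:ℝ)⁻¹*(1-γ)⁻¹ + u₀*u₁*((1+γ/2)*Q)⁻¹, (3:ℝ)⁻¹*(1-γ)⁻¹ + u₀*u₂*((1+γ/2)*Q)⁻¹;
        (3:ℝ)⁻¹*(1-γ)⁻¹ + u₁*u₀*((1+γ/2)*Q)⁻¹, (3:ℝ)⁻¹*(1-γ)⁻¹ + u₁*u₁*((1+γ/2)*Q)⁻¹, (3:ℝ)⁻¹*(1-γ)⁻¹ + u₁*u₂*((1+γ/2)*Q)⁻¹;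
        (3:ℝ)⁻¹*(1-γ)⁻¹ + u₂*u₀*((1+γ/2)*Q)⁻¹, (3:ℝ)⁻¹*(1-γ)⁻¹ + u₂*u₁*((1+γ/2)*Q)⁻¹, (3:ℝ)⁻¹*(1-γ)⁻¹ + u₂*u₂*((1+γ/2)*Q)⁻¹] := by
    rw [hT]
    ext i j
    fin_cases i <;> fin_cases j <;>
      simp [Matrix.mul_apply, Fin.sum_univ_succ, Matrix.transpose_apply] <;>
      linear_combination (1 - γ)⁻¹ * h13
  rw [hV]
  have h2 : u₂ = -u₀ - u₁ := by linarith
  subst h2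
  subst hQ
  simp only [frobSq, Fin.sum_univ_three, Matrix.sub_apply, Matrix.smul_apply,
    Matrix.cons_val', Matrix.cons_val_zero, Matrix.cons_val_one, Matrix.head_cons,
    Matrix.empty_val', Matrix.cons_val_fin_one, Matrix.head_fin_const, smul_eq_mul,
    Matrix.of_apply, Matrix.cons_val_two, Matrix.tail_cons]
  field_simp
  ring

/-- For the 3-state cycle `Pπ`, with `e₁ ∝ (1,1,1)` and `(e₂,e₃)` an orthonormal basis
of `e₁^⊥`, the TD value-approximation error `‖Φ_ω(Φ_ωᵀLΦ_ω)⁻¹Φ_ωᵀ - L⁻¹‖²_F` of the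
rotating representations `Φ_ω = [e₁, ω e₂ + (1-ω)e₃]` is constant in `ω ∈ [0,1]`. -/
theorem stmt16 (γ : ℝ) (hγ0 : 0 < γ) (hγ1 : γ < 1)
    (Pπ : Matrix (Fin 3) (Fin 3) ℝ)
    (hP : Pπ = !![0, 1, 0; 0, 0, 1; 1, 0, 0])
    (L : Matrix (Fin 3) (Fin 3) ℝ) (hLdef : L = 1 - γ • Pπ)
    (e₁ e₂ e₃ : Fin 3 → ℝ)
    (he₁ : e₁ = fun _ => (Real.sqrt 3)⁻¹)
    (he₂ : e₂ ⬝ᵥ e₂ = 1) (he₃ : e₃ ⬝ᵥ e₃ = 1) (he₂₃ : e₂ ⬝ᵥ e₃ = 0)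
    (he₁₂ : e₁ ⬝ᵥ e₂ = 0) (he₁₃ : e₁ ⬝ᵥ e₃ = 0)
    (Φ : ℝ → Matrix (Fin 3) (Fin 2) ℝ)
    (hΦ : ∀ ω, Φ ω = Matrix.of fun i (j : Fin 2) =>
      if j = 0 then e₁ i else ω * e₂ i + (1 - ω) * e₃ i)
    (hinv : ∀ ω ∈ Set.Icc (0 : ℝ) 1, IsUnit ((Φ ω)ᵀ * L * Φ ω)) :
    ∃ c : ℝ, ∀ ω ∈ Set.Icc (0 : ℝ) 1,
      frobSq (Φ ω * ((Φ ω)ᵀ * L * Φ ω)⁻¹ * (Φ ω)ᵀ - L⁻¹) = c := by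
  refine ⟨4 / (2 + γ) ^ 2, ?_⟩
  intro ω hω
  rw [Set.mem_Icc] at hω
  set s := Real.sqrt 3 with hsdef
  have hs : s ^ 2 = 3 := Real.sq_sqrt (by norm_num)
  have hs0 : s ≠ 0 := ne_of_gt (Real.sqrt_pos.mpr (by norm_num))
  have h22 : e₂ 0 * e₂ 0 + e₂ 1 * e₂ 1 + e₂ 2 * e₂ 2 = 1 := by
    simpa [dotProduct, Fin.sum_univ_three] using he₂
  have h33 : e₃ 0 * e₃ 0 + e₃ 1 * e₃ 1 + e₃ 2 * e₃ 2 = 1 := by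
    simpa [dotProduct, Fin.sum_univ_three] using he₃
  have h23 : e₂ 0 * e₃ 0 + e₂ 1 * e₃ 1 + e₂ 2 * e₃ 2 = 0 := by
    simpa [dotProduct, Fin.sum_univ_three] using he₂₃
  have hS2 : e₂ 0 + e₂ 1 + e₂ 2 = 0 := by
    have h := he₁₂
    rw [he₁] at h
    simp only [dotProduct, Fin.sum_univ_three] at h
    field_simp at h
    linarith
  have hS3 : e₃ 0 + e₃ 1 + e₃ 2 = 0 := by
    have h := he₁₃
    rw [he₁] at h
    simp only [dotProduct, Fin.sum_univ_three] at h
    field_simp at h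
    linarith
  have h1 : (ω * e₂ 0 + (1 - ω) * e₃ 0) + (ω * e₂ 1 + (1 - ω) * e₃ 1) +
      (ω * e₂ 2 + (1 - ω) * e₃ 2) = 0 := by
    linear_combination ω * hS2 + (1 - ω) * hS3
  have hQ : (ω * e₂ 0 + (1 - ω) * e₃ 0) ^ 2 + (ω * e₂ 1 + (1 - ω) * e₃ 1) ^ 2 +
      (ω * e₂ 2 + (1 - ω) * e₃ 2) ^ 2 = ω ^ 2 + (1 - ω) ^ 2 := by
    linear_combination ω ^ 2 * h22 + (1 - ω) ^ 2 * h33 + 2 * ω * (1 - ω) * h23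
  have hQ0 : ω ^ 2 + (1 - ω) ^ 2 ≠ 0 := by
    have : 0 < ω ^ 2 + (1 - ω) ^ 2 := by nlinarith [sq_nonneg (2 * ω - 1)]
    exact this.ne'
  have hΦeq : Φ ω = !![s⁻¹, ω * e₂ 0 + (1 - ω) * e₃ 0; s⁻¹, ω * e₂ 1 + (1 - ω) * e₃ 1;
      s⁻¹, ω * e₂ 2 + (1 - ω) * e₃ 2] := by
    rw [hΦ]
    ext i j
    fin_cases i <;> fin_cases j <;> simp [he₁, Matrix.vecHead, Matrix.vecTail]
  have hLeq : L = !![1, -γ, 0; 0, 1, -γ; -γ, 0, 1] := by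
    rw [hLdef, hP]
    ext i j
    fin_cases i <;> fin_cases j <;>
      simp [Matrix.sub_apply, Matrix.smul_apply, Matrix.one_apply, Matrix.vecHead, Matrix.vecTail]
  rw [hΦeq, hLeq]
  exact main_aux γ s _ _ _ _ hγ0 hγ1 hs hs0 h1 hQ hQ0
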